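/- arXiv:1203.6501 — 2 statements merged into one kernel-verified Lean document; each statement's English description precedes it below -/
import Mathlib

section
/- Let γ ⊂ ℝ² be a rectifiable curve, Q a square, and for k ≥ 1 let #_k(Q) be the number of dyadic subsquares of Q of side length 2^{-k}|Q| that intersect γ. If γ is not contained in Q (i.e., γ meets the complement of Q), then H¹(γ ∩ Q) ≥ c·(2^{-k}·#_k(Q) − 4)·|Q| for a universal constant c > 0. -/
open Metric MeasureTheory Filter Set

noncomputable section

/-- An affine line in a real normed space. -/
def IsLine {E : Type*} [NormedAddCommGroup E] [NormedSpace ℝ E] (L : Set E) : Prop :=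
  ∃ a v : E, v ≠ 0 ∧ L = {p | ∃ t : ℝ, p = a + t • v}

/-- The Jones `β`-number of `K` at `x` and scale `r`:
`inf` over affine lines `L` of `sup_{z ∈ K ∩ B(x,r)} dist(z, L) / r`. -/
noncomputable def betaNum {E : Type*} [NormedAddCommGroup E] [NormedSpace ℝ E]
    (K : Set E) (x : E) (r : ℝ) : ℝ :=
  sInf ((fun L => sSup ((fun z => infDist z L) '' (K ∩ closedBall x r)) / r) ''
    {L : Set E | IsLine L})

open scoped Classical

/-- The closed square in the plane with lower-left corner `(a, b)` and side `s`. -/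
def planeSq (a b s : ℝ) : Set (EuclideanSpace ℝ (Fin 2)) :=
  {p | p 0 ∈ Icc a (a + s) ∧ p 1 ∈ Icc b (b + s)}

/-- A curve: a continuous image of `[0,1]`. -/
def IsCurve (γ : Set (EuclideanSpace ℝ (Fin 2))) : Prop :=
  ∃ f : ℝ → EuclideanSpace ℝ (Fin 2), ContinuousOn f (Icc 0 1) ∧ γ = f '' Icc 0 1

/-- The number of generation-`k` dyadic subsquares of the square with corner `(a,b)`
and side `s` which meet `γ`. -/
noncomputable def dyadicCount (γ : Set (EuclideanSpace ℝ (Fin 2))) (a b s : ℝ) (k : ℕ) : ℕ :=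
  Finset.card (Finset.univ.filter (fun p : Fin (2 ^ k) × Fin (2 ^ k) =>
    (γ ∩ planeSq (a + ((p.1 : ℕ) : ℝ) * (s / 2 ^ k)) (b + ((p.2 : ℕ) : ℝ) * (s / 2 ^ k))
      (s / 2 ^ k)).Nonempty))

open scoped NNReal ENNReal

lemma lip_proj (i : Fin 2) : LipschitzWith 1 (fun x : EuclideanSpace ℝ (Fin 2) => x i) := by
  have := (LipschitzWith.eval i).comp (PiLp.lipschitzWith_ofLp 2 (fun _ : Fin 2 => ℝ))
  rw [mul_one] at this
  exact this

lemma cont_proj (i : Fin 2) : Continuous (fun x : EuclideanSpace ℝ (Fin 2) => x i) :=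
  (lip_proj i).continuous

lemma isClosed_planeSq (a b s : ℝ) : IsClosed (planeSq a b s) := by
  have : planeSq a b s = (fun x : EuclideanSpace ℝ (Fin 2) => x 0) ⁻¹' (Icc a (a+s)) ∩
      (fun x : EuclideanSpace ℝ (Fin 2) => x 1) ⁻¹' (Icc b (b+s)) := rfl
  rw [this]
  exact ((isClosed_Icc.preimage (cont_proj 0)).inter (isClosed_Icc.preimage (cont_proj 1)))

lemma key_coord (f : ℝ → EuclideanSpace ℝ (Fin 2)) (t₀ u mi h : ℝ) (i : Fin 2)
    (hh : 0 < h) (ht : t₀ ≤ u) (hf : ContinuousOn f (Icc t₀ u))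
    (h0 : |f t₀ i - mi| ≤ h / 2) (h1 : |f u i - mi| = 3 * h / 2) :
    ENNReal.ofReal h ≤ μH[1] (f '' Icc t₀ u) := by
  set g : ℝ → ℝ := fun t => f t i with hg
  have hgc : ContinuousOn g (Icc t₀ u) := (cont_proj i).comp_continuousOn hf
  have hdist : h ≤ |g u - g t₀| := by
    have := abs_sub_abs_le_abs_sub (f u i - mi) (f t₀ i - mi)
    have h2 : |(f u i - mi) - (f t₀ i - mi)| = |g u - g t₀| := by ring_nf; rfl
    simp only [hg]
    rw [h2] at this
    linarith
  have hsub : uIcc (g t₀) (g u) ⊆ g '' Icc t₀ u := by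
    have := intermediate_value_uIcc (a := t₀) (b := u) (f := g)
      (by rwa [Set.uIcc_of_le ht])
    rwa [Set.uIcc_of_le ht] at this
  calc ENNReal.ofReal h ≤ ENNReal.ofReal |g u - g t₀| := ENNReal.ofReal_le_ofReal hdist
    _ = volume (uIcc (g t₀) (g u)) := by rw [Real.volume_interval]
    _ = μH[1] (uIcc (g t₀) (g u)) := by rw [MeasureTheory.hausdorffMeasure_real]
    _ ≤ μH[1] (g '' Icc t₀ u) := measure_mono hsub
    _ = μH[1] ((fun x : EuclideanSpace ℝ (Fin 2) => x i) '' (f '' Icc t₀ u)) := by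
        rw [Set.image_image]
    _ ≤ ((1:ℝ≥0) : ℝ≥0∞) ^ (1:ℝ) * μH[1] (f '' Icc t₀ u) :=
        (lip_proj i).hausdorffMeasure_image_le zero_le_one _
    _ = μH[1] (f '' Icc t₀ u) := by simp

lemma cross (f : ℝ → EuclideanSpace ℝ (Fin 2)) (t₀ t₁ c0 c1 h : ℝ)
    (hh : 0 < h) (ht : t₀ ≤ t₁) (hf : ContinuousOn f (Icc t₀ t₁))
    (hp : f t₀ ∈ planeSq c0 c1 h)
    (hq : f t₁ ∉ planeSq (c0 - h) (c1 - h) (3 * h)) :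
    ENNReal.ofReal h ≤ μH[1] (f '' Icc t₀ t₁ ∩ planeSq (c0 - h) (c1 - h) (3 * h)) := by
  set m : Fin 2 → ℝ := ![c0 + h / 2, c1 + h / 2] with hm
  set φ : ℝ → ℝ := fun t => max |f t 0 - m 0| |f t 1 - m 1| with hφ
  have hφc : ContinuousOn φ (Icc t₀ t₁) := by
    have c1 : ContinuousOn (fun t => |f t 0 - m 0|) (Icc t₀ t₁) :=
      (((cont_proj 0).comp_continuousOn hf).sub continuousOn_const).abs
    have c2 : ContinuousOn (fun t => |f t 1 - m 1|) (Icc t₀ t₁) :=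
      (((cont_proj 1).comp_continuousOn hf).sub continuousOn_const).abs
    exact c1.sup c2
  have hm0 : m 0 = c0 + h / 2 := rfl
  have hm1 : m 1 = c1 + h / 2 := rfl
  have hmemB : ∀ x : EuclideanSpace ℝ (Fin 2), |x 0 - m 0| ≤ 3 * h / 2 → |x 1 - m 1| ≤ 3 * h / 2 →
      x ∈ planeSq (c0 - h) (c1 - h) (3 * h) := by
    intro x h0 h1
    rw [abs_le] at h0 h1
    rw [hm0] at h0; rw [hm1] at h1
    exact ⟨⟨by linarith [h0.1], by linarith [h0.2]⟩, ⟨by linarith [h1.1], by linarith [h1.2]⟩⟩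
  have hφ0 : φ t₀ ≤ h / 2 := by
    obtain ⟨⟨a1, a2⟩, ⟨b1, b2⟩⟩ := hp
    apply max_le <;> rw [abs_le] <;> constructor <;> simp only [hm0, hm1] <;> linarith
  have hφ1 : 3 * h / 2 < φ t₁ := by
    by_contra hle
    push_neg at hle
    exact hq (hmemB _ (le_trans (le_max_left _ _) hle) (le_trans (le_max_right _ _) hle))
  set S : Set ℝ := {t ∈ Icc t₀ t₁ | 3 * h / 2 ≤ φ t} with hS
  have hSc : IsClosed S := by
    have : S = Icc t₀ t₁ ∩ φ ⁻¹' (Ici (3 * h / 2)) := rfl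
    rw [this]
    exact hφc.preimage_isClosed_of_isClosed isClosed_Icc isClosed_Ici
  have hSne : S.Nonempty := ⟨t₁, ⟨ht, le_refl _⟩, hφ1.le⟩
  have hSbdd : BddBelow S := ⟨t₀, fun t htS => htS.1.1⟩
  set u := sInf S with hu
  have huS : u ∈ S := hSc.csInf_mem hSne hSbdd
  have ht₀u : t₀ ≤ u := huS.1.1
  have hut₁ : u ≤ t₁ := huS.1.2
  have hlb : ∀ t ∈ S, u ≤ t := fun t htS => csInf_le hSbdd htS
  have hA : ∀ t ∈ Icc t₀ u, φ t ≤ 3 * h / 2 := by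
    intro t htI
    by_contra hlt
    push_neg at hlt
    have hsub : Icc (φ t₀) (φ t) ⊆ φ '' Icc t₀ t :=
      intermediate_value_Icc htI.1 (hφc.mono (Icc_subset_Icc le_rfl (htI.2.trans hut₁)))
    have hmem32 : (3 * h / 2 : ℝ) ∈ Icc (φ t₀) (φ t) := ⟨by linarith, by linarith⟩
    obtain ⟨t', ht'I, ht'⟩ := hsub hmem32
    have ht'S : t' ∈ S := ⟨⟨ht'I.1, ht'I.2.trans (htI.2.trans hut₁)⟩, le_of_eq ht'.symm⟩
    have h1 : u ≤ t' := hlb t' ht'S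
    have : t' = t := le_antisymm ht'I.2 (htI.2.trans h1)
    rw [this] at ht'
    linarith
  have hφu : φ u = 3 * h / 2 := le_antisymm (hA u ⟨ht₀u, le_rfl⟩) huS.2
  have hsubB : f '' Icc t₀ u ⊆ planeSq (c0 - h) (c1 - h) (3 * h) := by
    rintro x ⟨t, htI, rfl⟩
    exact hmemB _ (le_trans (le_max_left _ _) (hA t htI))
      (le_trans (le_max_right _ _) (hA t htI))
  have hchoice : |f u 0 - m 0| = 3 * h / 2 ∨ |f u 1 - m 1| = 3 * h / 2 := by
    rcases max_choice |f u 0 - m 0| |f u 1 - m 1| with hc | hc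
    · left; rw [← hc]; exact hφu
    · right; rw [← hc]; exact hφu
  have hbase : ENNReal.ofReal h ≤ μH[1] (f '' Icc t₀ u) := by
    rcases hchoice with hc | hc
    · exact key_coord f t₀ u (m 0) h 0 hh ht₀u (hf.mono (Icc_subset_Icc le_rfl hut₁))
        (le_trans (le_max_left _ _) hφ0) hc
    · exact key_coord f t₀ u (m 1) h 1 hh ht₀u (hf.mono (Icc_subset_Icc le_rfl hut₁))
        (le_trans (le_max_right _ _) hφ0) hc
  refine hbase.trans (measure_mono ?_)
  intro x hx
  exact ⟨image_mono (f := f) (Icc_subset_Icc le_rfl hut₁) hx, hsubB hx⟩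

lemma card_strip (n : ℕ) (c h v : ℝ) (hh : 0 < h) :
    (Finset.univ.filter (fun i : Fin n =>
      v ∈ Icc (c + ((i : ℕ) : ℝ) * h - h) (c + ((i : ℕ) : ℝ) * h - h + 3 * h))).card ≤ 4 := by
  set T := Finset.univ.filter (fun i : Fin n =>
      v ∈ Icc (c + ((i : ℕ) : ℝ) * h - h) (c + ((i : ℕ) : ℝ) * h - h + 3 * h)) with hT
  rcases T.eq_empty_or_nonempty with hE | hne
  · simp [hE]
  · set m := T.min' hne with hm
    have hmT : m ∈ T := T.min'_mem hne
    have hmv := (Finset.mem_filter.1 hmT).2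
    have himg : T.image Fin.val ⊆ Finset.Icc (m : ℕ) ((m : ℕ) + 3) := by
      intro x hx
      obtain ⟨j, hjT, rfl⟩ := Finset.mem_image.1 hx
      have hjv := (Finset.mem_filter.1 hjT).2
      have h1 : (m : ℕ) ≤ (j : ℕ) := by
        have := T.min'_le j hjT
        rwa [Fin.le_def] at this
      have h2 : ((j : ℕ) : ℝ) ≤ ((m : ℕ) : ℝ) + 3 := by
        have a1 := hjv.1
        have a2 := hmv.2
        exact le_of_mul_le_mul_right (by linarith) hh
      have h3 : (j : ℕ) ≤ (m : ℕ) + 3 := by exact_mod_cast h2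
      exact Finset.mem_Icc.2 ⟨h1, h3⟩
    calc T.card = (T.image Fin.val).card :=
          (Finset.card_image_of_injective _ Fin.val_injective).symm
      _ ≤ (Finset.Icc (m : ℕ) ((m : ℕ) + 3)).card := Finset.card_le_card himg
      _ = 4 := by rw [Nat.card_Icc]; omega

/-- if a rectifiable curve `γ` meets the complement of a square `Q`
of side `s`, then `H¹(γ ∩ Q) ≥ c·(2^{-k}·#_k(Q) − 4)·s`, where `#_k(Q)` is the number
of generation-`k` dyadic subsquares of `Q` meeting `γ`, with `c > 0` universal. -/
theorem length_from_dyadic_count :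
    ∃ c : ℝ, 0 < c ∧
      ∀ (γ : Set (EuclideanSpace ℝ (Fin 2))) (a b s : ℝ) (k : ℕ), 0 < s → 1 ≤ k →
        IsCurve γ → μH[1] γ < ⊤ → (γ ∩ (planeSq a b s)ᶜ).Nonempty →
        ENNReal.ofReal (c * (((2 : ℝ) ^ k)⁻¹ * (dyadicCount γ a b s k : ℝ) - 4) * s) ≤
          μH[1] (γ ∩ planeSq a b s) := by
  refine ⟨1 / 16, by norm_num, ?_⟩
  rintro γ a b s k hs hk ⟨f, hf, rfl⟩ - ⟨q, hqG, hqQ⟩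
  set G := f '' Icc 0 1 with hG
  have hh : (0:ℝ) < s / 2 ^ k := by positivity
  set h := s / (2:ℝ) ^ k with hh_def
  have hGc : IsCompact G := isCompact_Icc.image_of_continuousOn hf
  set B : Fin (2 ^ k) × Fin (2 ^ k) → Set (EuclideanSpace ℝ (Fin 2)) := fun p =>
    planeSq (a + ((p.1 : ℕ) : ℝ) * h - h) (b + ((p.2 : ℕ) : ℝ) * h - h) (3 * h) with hB
  set F := Finset.univ.filter (fun p : Fin (2 ^ k) × Fin (2 ^ k) =>
    (G ∩ planeSq (a + ((p.1 : ℕ) : ℝ) * h) (b + ((p.2 : ℕ) : ℝ) * h) h).Nonempty) with hF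
  have hcount : dyadicCount G a b s k = F.card := rfl
  set Cond : Fin (2 ^ k) × Fin (2 ^ k) → Prop := fun p =>
    (p.1 : ℕ) ≠ 0 ∧ (p.1 : ℕ) ≠ 2 ^ k - 1 ∧ (p.2 : ℕ) ≠ 0 ∧ (p.2 : ℕ) ≠ 2 ^ k - 1 with hCond
  set F' := F.filter Cond with hF'
  -- interior 3-squares are inside Q
  have hBQ : ∀ p ∈ F', B p ⊆ planeSq a b s := by
    intro p hp
    obtain ⟨-, hc⟩ := Finset.mem_filter.1 hp
    obtain ⟨hi0, hi1, hj0, hj1⟩ := hc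
    have hile : (p.1 : ℕ) ≤ 2 ^ k - 1 := Nat.le_sub_one_of_lt p.1.isLt
    have hjle : (p.2 : ℕ) ≤ 2 ^ k - 1 := Nat.le_sub_one_of_lt p.2.isLt
    have hi2 : (p.1 : ℕ) + 2 ≤ 2 ^ k := by omega
    have hj2 : (p.2 : ℕ) + 2 ≤ 2 ^ k := by omega
    have hi1' : (1:ℝ) ≤ ((p.1 : ℕ) : ℝ) := by exact_mod_cast Nat.one_le_iff_ne_zero.2 hi0
    have hj1' : (1:ℝ) ≤ ((p.2 : ℕ) : ℝ) := by exact_mod_cast Nat.one_le_iff_ne_zero.2 hj0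
    have hi2' : ((p.1 : ℕ) : ℝ) + 2 ≤ (2:ℝ) ^ k := by exact_mod_cast hi2
    have hj2' : ((p.2 : ℕ) : ℝ) + 2 ≤ (2:ℝ) ^ k := by exact_mod_cast hj2
    have hsh : (2:ℝ) ^ k * h = s := by rw [hh_def]; field_simp
    rintro y ⟨⟨y01, y02⟩, y11, y12⟩
    refine ⟨⟨by nlinarith, by nlinarith⟩, by nlinarith, by nlinarith⟩
  -- per-square lower bound
  have hstep1 : ∀ p ∈ F', ENNReal.ofReal h ≤ μH[1] (G ∩ B p) := by
    intro p hp
    obtain ⟨hpF, -⟩ := Finset.mem_filter.1 hp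
    obtain ⟨x, hxG, hxsq⟩ := (Finset.mem_filter.1 hpF).2
    obtain ⟨tx, htx, hftx⟩ := hxG
    obtain ⟨tq, htq, hftq⟩ := hqG
    have hqB : f tq ∉ B p := by
      rw [hftq]
      exact fun hmem => hqQ (hBQ p hp hmem)
    rcases le_total tx tq with hle | hle
    · have hc := cross f tx tq (a + ((p.1 : ℕ) : ℝ) * h) (b + ((p.2 : ℕ) : ℝ) * h) h hh hle
        (hf.mono (Icc_subset_Icc htx.1 htq.2)) (by rw [hftx]; exact hxsq) hqB
      refine hc.trans (measure_mono ?_)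
      exact inter_subset_inter_left _ (image_mono (f := f) (Icc_subset_Icc htx.1 htq.2))
    · set g : ℝ → EuclideanSpace ℝ (Fin 2) := fun t => f (tx + tq - t) with hg
      have hmaps : ∀ t ∈ Icc tq tx, tx + tq - t ∈ Icc (0:ℝ) 1 := by
        rintro t ⟨h1, h2⟩
        exact ⟨by linarith [htq.1], by linarith [htx.2]⟩
      have hgc : ContinuousOn g (Icc tq tx) := by
        apply hf.comp ((continuous_const.sub continuous_id).continuousOn)
        exact hmaps
      have hgq : g tq ∈ planeSq (a + ((p.1 : ℕ) : ℝ) * h) (b + ((p.2 : ℕ) : ℝ) * h) h := by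
        have : g tq = f tx := by rw [hg]; simp
        rw [this, hftx]; exact hxsq
      have hgx : g tx ∉ B p := by
        have : g tx = f tq := by rw [hg]; simp
        rw [this]; exact hqB
      have hc := cross g tq tx (a + ((p.1 : ℕ) : ℝ) * h) (b + ((p.2 : ℕ) : ℝ) * h) h hh hle
        hgc hgq hgx
      refine hc.trans (measure_mono (inter_subset_inter_left _ ?_))
      rintro y ⟨t, htI, rfl⟩
      exact ⟨tx + tq - t, hmaps t htI, rfl⟩
  -- measurability
  have hBmeas : ∀ p : Fin (2 ^ k) × Fin (2 ^ k), MeasurableSet (G ∩ B p) := fun p =>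
    (hGc.isClosed.inter (isClosed_planeSq _ _ _)).measurableSet
  have hGQmeas : MeasurableSet (G ∩ planeSq a b s) :=
    (hGc.isClosed.inter (isClosed_planeSq _ _ _)).measurableSet
  -- bounded overlap
  have hpoint : ∀ x, (∑ p ∈ F', (G ∩ B p).indicator (1 : EuclideanSpace ℝ (Fin 2) → ℝ≥0∞) x) ≤
      (16:ℝ≥0∞) * (G ∩ planeSq a b s).indicator (1 : EuclideanSpace ℝ (Fin 2) → ℝ≥0∞) x := by
    intro x
    by_cases hx : x ∈ G ∩ planeSq a b s
    · rw [Set.indicator_of_mem hx, Pi.one_apply, mul_one]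
      have e1 : (∑ p ∈ F', (G ∩ B p).indicator (1 : EuclideanSpace ℝ (Fin 2) → ℝ≥0∞) x) =
          ∑ p ∈ F', if x ∈ G ∩ B p then (1:ℝ≥0∞) else 0 :=
        Finset.sum_congr rfl fun p _ => by simp [Set.indicator_apply]
      rw [e1, Finset.sum_boole]
      have hsub : F'.filter (fun p => x ∈ G ∩ B p) ⊆
          (Finset.univ.filter (fun i : Fin (2 ^ k) =>
            x 0 ∈ Icc (a + ((i : ℕ) : ℝ) * h - h) (a + ((i : ℕ) : ℝ) * h - h + 3 * h))) ×ˢ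
          (Finset.univ.filter (fun j : Fin (2 ^ k) =>
            x 1 ∈ Icc (b + ((j : ℕ) : ℝ) * h - h) (b + ((j : ℕ) : ℝ) * h - h + 3 * h))) := by
        intro p hp
        obtain ⟨-, -, hxB⟩ := Finset.mem_filter.1 hp
        exact Finset.mem_product.2 ⟨Finset.mem_filter.2 ⟨Finset.mem_univ _, hxB.1⟩,
          Finset.mem_filter.2 ⟨Finset.mem_univ _, hxB.2⟩⟩
      have hcard : (F'.filter (fun p => x ∈ G ∩ B p)).card ≤ 16 := by
        refine le_trans (Finset.card_le_card hsub) ?_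
        rw [Finset.card_product]
        exact Nat.mul_le_mul (card_strip _ a h (x 0) hh) (card_strip _ b h (x 1) hh)
      exact_mod_cast Nat.cast_le.2 hcard
    · rw [Set.indicator_of_notMem hx, mul_zero]
      refine le_of_eq (Finset.sum_eq_zero fun p hp => ?_)
      exact Set.indicator_of_notMem (fun hxB => hx ⟨hxB.1, hBQ p hp hxB.2⟩) _
  have hstep2 : (∑ p ∈ F', μH[1] (G ∩ B p)) ≤ 16 * μH[1] (G ∩ planeSq a b s) := by
    calc (∑ p ∈ F', μH[1] (G ∩ B p))
        = ∑ p ∈ F', ∫⁻ x, (G ∩ B p).indicator (1 : EuclideanSpace ℝ (Fin 2) → ℝ≥0∞) x ∂(μH[1]) := by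
          refine Finset.sum_congr rfl fun p _ => ?_
          rw [lintegral_indicator_one (hBmeas p)]
      _ = ∫⁻ x, ∑ p ∈ F', (G ∩ B p).indicator (1 : EuclideanSpace ℝ (Fin 2) → ℝ≥0∞) x ∂(μH[1]) :=
          (lintegral_finset_sum _ fun p _ => measurable_one.indicator (hBmeas p)).symm
      _ ≤ ∫⁻ x, (16:ℝ≥0∞) * (G ∩ planeSq a b s).indicator (1 : EuclideanSpace ℝ (Fin 2) → ℝ≥0∞) x ∂(μH[1]) :=
          lintegral_mono hpoint
      _ = 16 * μH[1] (G ∩ planeSq a b s) := by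
          rw [lintegral_const_mul 16 (measurable_one.indicator hGQmeas),
            lintegral_indicator_one hGQmeas]
  have hsum : (F'.card : ℝ≥0∞) * ENNReal.ofReal h ≤ 16 * μH[1] (G ∩ planeSq a b s) := by
    calc (F'.card : ℝ≥0∞) * ENNReal.ofReal h = ∑ _p ∈ F', ENNReal.ofReal h := by
          rw [Finset.sum_const, nsmul_eq_mul]
      _ ≤ ∑ p ∈ F', μH[1] (G ∩ B p) := Finset.sum_le_sum hstep1
      _ ≤ 16 * μH[1] (G ∩ planeSq a b s) := hstep2
  -- boundary count
  have hbd : F.card ≤ F'.card + 4 * 2 ^ k := by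
    have hbound : (F.filter (fun p => ¬ Cond p)).card ≤ 4 * 2 ^ k := by
      have hlt : 2 ^ k - 1 < 2 ^ k := by
        have : 0 < 2 ^ k := Nat.pow_pos (by norm_num)
        omega
      set e : Fin (2 ^ k) := ⟨2 ^ k - 1, hlt⟩ with he
      have hsub2 : F.filter (fun p => ¬ Cond p) ⊆
          (({0, e} : Finset (Fin (2 ^ k))) ×ˢ Finset.univ) ∪
          (Finset.univ ×ˢ ({0, e} : Finset (Fin (2 ^ k)))) := by
        intro p hp
        obtain ⟨-, hnc⟩ := Finset.mem_filter.1 hp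
        simp only [hCond] at hnc
        push_neg at hnc
        by_cases h1 : (p.1 : ℕ) = 0
        · exact Finset.mem_union_left _ (Finset.mem_product.2
            ⟨by simp [Finset.mem_insert, Fin.ext_iff, h1], Finset.mem_univ _⟩)
        by_cases h2 : (p.1 : ℕ) = 2 ^ k - 1
        · exact Finset.mem_union_left _ (Finset.mem_product.2
            ⟨by simp [Finset.mem_insert, Fin.ext_iff, h2, he], Finset.mem_univ _⟩)
        by_cases h3 : (p.2 : ℕ) = 0
        · exact Finset.mem_union_right _ (Finset.mem_product.2
            ⟨Finset.mem_univ _, by simp [Finset.mem_insert, Fin.ext_iff, h3]⟩)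
        · have h4 := hnc h1 h2 h3
          exact Finset.mem_union_right _ (Finset.mem_product.2
            ⟨Finset.mem_univ _, by simp [Finset.mem_insert, Fin.ext_iff, h4, he]⟩)
      refine le_trans (Finset.card_le_card hsub2) (le_trans (Finset.card_union_le _ _) ?_)
      have hc2 : ({0, e} : Finset (Fin (2 ^ k))).card ≤ 2 := Finset.card_insert_le _ _ |>.trans
        (by simp)
      rw [Finset.card_product, Finset.card_product, Finset.card_univ, Fintype.card_fin]
      have h2k : 0 < 2 ^ k := Nat.pow_pos (by norm_num)
      calc ({0, e} : Finset (Fin (2 ^ k))).card * 2 ^ k +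
            2 ^ k * ({0, e} : Finset (Fin (2 ^ k))).card
          ≤ 2 * 2 ^ k + 2 ^ k * 2 :=
            Nat.add_le_add (Nat.mul_le_mul_right _ hc2) (Nat.mul_le_mul_left _ hc2)
        _ = 4 * 2 ^ k := by ring
    have h1 : F.card ≤ F'.card + (F.filter (fun p => ¬ Cond p)).card := by
      rw [hF']
      exact le_of_eq (Finset.card_filter_add_card_filter_not (p := Cond)).symm
    exact le_trans h1 (Nat.add_le_add_left hbound _)
  -- final arithmetic
  rw [hcount]
  have hpow : (0:ℝ) < (2:ℝ) ^ k := by positivity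
  by_cases hN4 : ((F.card : ℝ)) ≤ 4 * (2:ℝ) ^ k
  · have hnonpos : 1 / 16 * (((2:ℝ) ^ k)⁻¹ * (F.card : ℝ) - 4) * s ≤ 0 := by
      have h1 : ((2:ℝ) ^ k)⁻¹ * (F.card : ℝ) ≤ 4 := by
        rw [inv_mul_le_iff₀ hpow]
        linarith
      exact mul_nonpos_iff.2 (Or.inr ⟨by linarith, hs.le⟩)
    rw [ENNReal.ofReal_eq_zero.2 hnonpos]
    exact bot_le
  · have hN' : (F.card : ℝ) - 4 * (2:ℝ) ^ k ≤ (F'.card : ℝ) := by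
      have h0 : (F.card : ℝ) ≤ ((F'.card + 4 * 2 ^ k : ℕ) : ℝ) := Nat.cast_le.mpr hbd
      push_cast at h0
      linarith
    have key : ENNReal.ofReal (16 * (1 / 16 * (((2:ℝ) ^ k)⁻¹ * (F.card : ℝ) - 4) * s)) ≤
        16 * μH[1] (G ∩ planeSq a b s) := by
      have heq : 16 * (1 / 16 * (((2:ℝ) ^ k)⁻¹ * (F.card : ℝ) - 4) * s) =
          ((F.card : ℝ) - 4 * (2:ℝ) ^ k) * h := by
        rw [hh_def]
        field_simp
      rw [heq]
      calc ENNReal.ofReal (((F.card : ℝ) - 4 * (2:ℝ) ^ k) * h)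
          ≤ ENNReal.ofReal ((F'.card : ℝ) * h) :=
            ENNReal.ofReal_le_ofReal (mul_le_mul_of_nonneg_right hN' hh.le)
        _ = (F'.card : ℝ≥0∞) * ENNReal.ofReal h := by
            rw [ENNReal.ofReal_mul (p := ((F'.card : ℕ) : ℝ)) (Nat.cast_nonneg _), ENNReal.ofReal_natCast]
        _ ≤ 16 * μH[1] (G ∩ planeSq a b s) := hsum
    have h16 : (16:ℝ≥0∞) * ENNReal.ofReal (1 / 16 * (((2:ℝ) ^ k)⁻¹ * (F.card : ℝ) - 4) * s) ≤
        16 * μH[1] (G ∩ planeSq a b s) := by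
      refine le_trans (le_of_eq ?_) key
      rw [ENNReal.ofReal_mul (by norm_num : (0:ℝ) ≤ 16)]
      norm_num
    exact (ENNReal.mul_le_mul_iff_right (by norm_num) (by norm_num)).1 h16
end
end

section
/- Let K be the four-corners-type Cantor set in [0,1]² constructed with ratios a_n = n²/(n+1)²: at step n+1 each square of generation n of side |S_n| is replaced by the four corner squares of side |S_{n+1}| = (a_{n+1}/4)|S_n|, and W = ∩_n ∪_i S_n^i. Then dim_H(W) = 1 and H¹(W) = 0. -/
open Metric MeasureTheory Filter Set

noncomputable section

/-- Side length of generation-`n` squares: `|S_n| = 4^{-n}·∏_{i=1}^n a_i` with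
`a_i = i²/(i+1)²`, i.e. `|S_n| = 4^{-n}/(n+1)²`. -/
noncomputable def sideLen (n : ℕ) : ℝ := 1 / (4 ^ n * ((n : ℝ) + 1) ^ 2)

/-- First coordinate of the corner of the generation-`n` square encoded by the
sequence of corner choices `σ`. -/
noncomputable def cornerX (n : ℕ) (σ : Fin n → Bool × Bool) : ℝ :=
  ∑ i : Fin n, if (σ i).1 then sideLen (i : ℕ) - sideLen ((i : ℕ) + 1) else 0

/-- Second coordinate of the corner of the generation-`n` square encoded by `σ`. -/
noncomputable def cornerY (n : ℕ) (σ : Fin n → Bool × Bool) : ℝ :=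
  ∑ i : Fin n, if (σ i).2 then sideLen (i : ℕ) - sideLen ((i : ℕ) + 1) else 0

/-- The modified four-corners Cantor set with ratios `a_n = n²/(n+1)²`. -/
def fourCornersW : Set (EuclideanSpace ℝ (Fin 2)) :=
  ⋂ n : ℕ, ⋃ σ : Fin n → Bool × Bool,
    planeSq (cornerX n σ) (cornerY n σ) (sideLen n)

open scoped ENNReal NNReal

namespace FCAux

noncomputable def dd (n : ℕ) : ℝ := sideLen n - sideLen (n + 1)

lemma sideLen_pos (n : ℕ) : 0 < sideLen n := by
  unfold sideLen; positivity

lemma sideLen_zero : sideLen 0 = 1 := by norm_num [sideLen]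

lemma sideLen_succ (n : ℕ) : sideLen (n + 1) = 1 / (4 ^ (n + 1) * ((n : ℝ) + 2) ^ 2) := by
  unfold sideLen; push_cast; ring_nf

lemma sideLen_le_geom (n : ℕ) : sideLen n ≤ (4 : ℝ)⁻¹ ^ n := by
  unfold sideLen
  rw [inv_pow, one_div]
  apply inv_anti₀ (by positivity)
  have h1 : (1:ℝ) ≤ ((n : ℝ) + 1) ^ 2 := by nlinarith [Nat.cast_nonneg (α := ℝ) n]
  nlinarith [pow_pos (show (0:ℝ) < 4 by norm_num) n]

lemma four_mul_sideLen_succ_le (n : ℕ) : 4 * sideLen (n + 1) ≤ sideLen n := by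
  rw [sideLen_succ]
  unfold sideLen
  rw [mul_one_div, div_le_div_iff₀ (by positivity) (by positivity)]
  have h1 : (0:ℝ) < 4 ^ n := by positivity
  have h2 : (0:ℝ) ≤ (n : ℝ) := Nat.cast_nonneg n
  have h3 : (4:ℝ) ^ (n + 1) = 4 ^ n * 4 := pow_succ 4 n
  nlinarith [pow_pos (show (0:ℝ) < 4 by norm_num) n]

lemma sideLen_succ_le (n : ℕ) : sideLen (n + 1) ≤ sideLen n := by
  nlinarith [four_mul_sideLen_succ_le n, sideLen_pos (n + 1)]

lemma sideLen_antitone : Antitone sideLen :=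
  antitone_nat_of_succ_le sideLen_succ_le

lemma dd_nonneg (n : ℕ) : 0 ≤ dd n := sub_nonneg.2 (sideLen_succ_le n)

lemma dd_le (n : ℕ) : dd n ≤ sideLen n := by
  have := sideLen_pos (n + 1); unfold dd; linarith

lemma sideLen_tendsto : Tendsto sideLen atTop (nhds 0) := by
  apply squeeze_zero (fun n => (sideLen_pos n).le) sideLen_le_geom
  exact tendsto_pow_atTop_nhds_zero_of_lt_one (by norm_num) (by norm_num)

lemma summable_dd_add (n : ℕ) : Summable (fun i => dd (n + i)) := by
  apply Summable.of_nonneg_of_le (fun i => dd_nonneg _)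
    (fun i => (dd_le _).trans ((sideLen_le_geom _).trans ?_))
    (summable_geometric_of_lt_one (by norm_num) (by norm_num) (r := (4:ℝ)⁻¹))
  apply pow_le_pow_of_le_one (by norm_num) (by norm_num)
  omega

lemma sum_range_dd (n m : ℕ) : ∑ i ∈ Finset.range m, dd (n + i) = sideLen n - sideLen (n + m) := by
  have : ∀ i, dd (n + i) = sideLen (n + i) - sideLen (n + (i + 1)) := by
    intro i; unfold dd; ring_nf
  simp_rw [this]
  exact Finset.sum_range_sub' (fun i => sideLen (n + i)) m

lemma tsum_dd (n : ℕ) : ∑' i, dd (n + i) = sideLen n := by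
  have hs := summable_dd_add n
  have h1 : Tendsto (fun m => ∑ i ∈ Finset.range m, dd (n + i)) atTop (nhds (∑' i, dd (n + i))) :=
    hs.hasSum.tendsto_sum_nat
  have h2 : Tendsto (fun m => ∑ i ∈ Finset.range m, dd (n + i)) atTop (nhds (sideLen n)) := by
    simp_rw [sum_range_dd]
    have : Tendsto (fun m => sideLen (n + m)) atTop (nhds 0) := by
      simpa [Function.comp_def, add_comm] using sideLen_tendsto.comp (tendsto_add_atTop_nat n)
    simpa using tendsto_const_nhds.sub this
  exact tendsto_nhds_unique h1 h2

/-- lower endpoint of the dyadic interval of generation `n` containing `t` -/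
noncomputable def lowEnd : ℕ → ℝ → ℝ
  | 0, _ => 0
  | n + 1, t =>
    if lowEnd n t + (2 : ℝ)⁻¹ ^ (n + 1) ≤ t then lowEnd n t + (2 : ℝ)⁻¹ ^ (n + 1)
    else lowEnd n t

/-- the `n`-th binary digit of `t` -/
noncomputable def dig (n : ℕ) (t : ℝ) : Bool :=
  decide (lowEnd n t + (2 : ℝ)⁻¹ ^ (n + 1) ≤ t)

lemma dig_iff {n : ℕ} {t : ℝ} : dig n t = true ↔ lowEnd n t + (2 : ℝ)⁻¹ ^ (n + 1) ≤ t := by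
  simp [dig]

lemma lowEnd_succ (n : ℕ) (t : ℝ) :
    lowEnd (n + 1) t = lowEnd n t + (if dig n t then (2 : ℝ)⁻¹ ^ (n + 1) else 0) := by
  show (if lowEnd n t + (2 : ℝ)⁻¹ ^ (n + 1) ≤ t then lowEnd n t + (2 : ℝ)⁻¹ ^ (n + 1)
    else lowEnd n t) = _
  by_cases h : lowEnd n t + (2 : ℝ)⁻¹ ^ (n + 1) ≤ t
  · rw [if_pos h, if_pos (dig_iff.2 h)]
  · rw [if_neg h, if_neg (fun hd => h (dig_iff.1 hd)), add_zero]

lemma lowEnd_eq_sum (n : ℕ) (t : ℝ) :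
    lowEnd n t = ∑ i ∈ Finset.range n, (if dig i t then (2 : ℝ)⁻¹ ^ (i + 1) else 0) := by
  induction n with
  | zero => simp [lowEnd]
  | succ n ih => rw [Finset.sum_range_succ, ← ih, lowEnd_succ]

lemma lowEnd_mem {t : ℝ} (h : t ∈ Ico (0 : ℝ) 1) (n : ℕ) :
    lowEnd n t ≤ t ∧ t < lowEnd n t + (2 : ℝ)⁻¹ ^ n := by
  induction n with
  | zero => simpa [lowEnd] using h
  | succ n ih =>
    have hpow : (2 : ℝ)⁻¹ ^ n = (2 : ℝ)⁻¹ ^ (n + 1) + (2 : ℝ)⁻¹ ^ (n + 1) := by ring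
    rw [lowEnd_succ]
    by_cases hcases : dig n t = true
    · rw [if_pos hcases]
      have hge := dig_iff.1 hcases
      have h2 := ih.2
      rw [hpow] at h2
      exact ⟨hge, by linarith⟩
    · rw [if_neg hcases, add_zero]
      have hlt : ¬(lowEnd n t + (2 : ℝ)⁻¹ ^ (n + 1) ≤ t) := fun hx => hcases (dig_iff.2 hx)
      push_neg at hlt
      exact ⟨ih.1, hlt⟩

/-- corner value determined by a code of bits -/
noncomputable def cX (n : ℕ) (b : ℕ → Bool) : ℝ :=
  ∑ i ∈ Finset.range n, (if b i then dd i else 0)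

lemma cX_congr {n : ℕ} {b b' : ℕ → Bool} (h : ∀ i < n, b i = b' i) : cX n b = cX n b' := by
  unfold cX
  exact Finset.sum_congr rfl fun i hi => by rw [h i (Finset.mem_range.1 hi)]

noncomputable def hc (n : ℕ) (t : ℝ) : ℝ := cX n (fun i => dig i t)

noncomputable def hh (t : ℝ) : ℝ := ∑' i, (if dig i t then dd i else 0)

lemma summable_dd : Summable dd := by simpa using summable_dd_add 0

lemma hterm_nonneg (t : ℝ) (i : ℕ) : 0 ≤ (if dig i t then dd i else 0) := by
  by_cases h : dig i t <;> simp [h, dd_nonneg]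

lemma hterm_le (t : ℝ) (i : ℕ) : (if dig i t then dd i else 0) ≤ dd i := by
  by_cases h : dig i t <;> simp [h, dd_nonneg]

lemma summable_hterm (t : ℝ) : Summable (fun i => if dig i t then dd i else 0) :=
  Summable.of_nonneg_of_le (hterm_nonneg t) (hterm_le t) summable_dd

set_option maxHeartbeats 1000000 in
lemma hh_mem (t : ℝ) (n : ℕ) : hh t ∈ Icc (hc n t) (hc n t + sideLen n) := by
  have hs := summable_hterm t
  have hsplit := hs.sum_add_tsum_nat_add n
  have hstail : Summable (fun i => if dig (i + n) t then dd (i + n) else 0) :=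
    (summable_nat_add_iff n).2 hs
  have htail_nonneg : 0 ≤ ∑' i, (if dig (i + n) t then dd (i + n) else 0) :=
    tsum_nonneg fun i => hterm_nonneg t _
  have htail_le : ∑' i, (if dig (i + n) t then dd (i + n) else 0) ≤ sideLen n := by
    rw [← tsum_dd n]
    apply Summable.tsum_le_tsum _ hstail (summable_dd_add n)
    intro i
    rw [add_comm i n]
    exact hterm_le t _
  have hceq : hc n t = ∑ i ∈ Finset.range n, (if dig i t then dd i else 0) := rfl
  have hhh : hh t = ((∑ i ∈ Finset.range n, if dig i t = true then dd i else 0) +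
      ∑' (i : ℕ), if dig (i + n) t = true then dd (i + n) else 0) := hsplit.symm
  constructor
  · rw [hceq, hhh]; linarith
  · rw [hceq, hhh]; linarith

lemma cXterm_nonneg (b : ℕ → Bool) (i : ℕ) : 0 ≤ (if b i then dd i else 0) := by
  by_cases h : b i <;> simp [h, dd_nonneg]

lemma sum_dd_Ico {a c : ℕ} (h : a ≤ c) :
    ∑ i ∈ Finset.Ico a c, dd i = sideLen a - sideLen c := by
  rw [Finset.sum_Ico_eq_sum_range]
  have : ∀ i, dd (a + i) = sideLen (a + i) - sideLen (a + (i + 1)) := by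
    intro i; unfold dd; ring_nf
  simp_rw [this]
  rw [Finset.sum_range_sub' (fun i => sideLen (a + i))]
  simp [Nat.add_sub_cancel' h]

lemma cX_split {n k : ℕ} (hk : k + 1 ≤ n) (b : ℕ → Bool) :
    cX n b = cX (k + 1) b + ∑ i ∈ Finset.Ico (k + 1) n, (if b i then dd i else 0) := by
  unfold cX
  rw [Finset.range_eq_Ico, ← Finset.sum_Ico_consecutive _ (Nat.zero_le (k + 1)) hk, ← Finset.range_eq_Ico]

lemma cX_succ (k : ℕ) (b : ℕ → Bool) :
    cX (k + 1) b = cX k b + (if b k then dd k else 0) := by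
  unfold cX; rw [Finset.sum_range_succ]

lemma tail_nonneg {n k : ℕ} (b : ℕ → Bool) :
    0 ≤ ∑ i ∈ Finset.Ico (k + 1) n, (if b i then dd i else 0) :=
  Finset.sum_nonneg fun i _ => cXterm_nonneg b i

lemma tail_le {n k : ℕ} (hk : k + 1 ≤ n) (b : ℕ → Bool) :
    ∑ i ∈ Finset.Ico (k + 1) n, (if b i then dd i else 0) ≤ sideLen (k + 1) - sideLen n := by
  rw [← sum_dd_Ico hk]
  apply Finset.sum_le_sum
  intro i _
  by_cases h : b i <;> simp [h, dd_nonneg]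

lemma sep1d {n k : ℕ} (hk : k < n) {b b' : ℕ → Bool} (hbk : b k = false) (hbk' : b' k = true)
    (hagree : ∀ i < k, b i = b' i) {u v : ℝ}
    (hu : u ∈ Icc (cX n b) (cX n b + sideLen n))
    (hv : v ∈ Icc (cX n b') (cX n b' + sideLen n)) :
    sideLen k - 2 * sideLen (k + 1) ≤ v - u := by
  have hk1 : k + 1 ≤ n := hk
  have hb := cX_split hk1 b
  have hb' := cX_split hk1 b'
  rw [cX_succ, hbk] at hb
  rw [cX_succ, hbk'] at hb'
  simp at hb hb'
  have hcc : cX k b = cX k b' := cX_congr fun i hi => hagree i hi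
  have h1 := tail_le hk1 b
  have h2 := tail_nonneg (n := n) (k := k) b'
  have hu2 := hu.2
  have hv1 := hv.1
  have hdd : dd k = sideLen k - sideLen (k + 1) := rfl
  rw [hb] at hu2
  rw [hb'] at hv1
  have h3 := tail_nonneg (n := n) (k := k) b
  linarith

lemma abs_coord_le_dist (z w : EuclideanSpace ℝ (Fin 2)) (j : Fin 2) :
    |z j - w j| ≤ dist z w := by
  rw [EuclideanSpace.dist_eq]
  have h0 : |z j - w j| = Real.sqrt (dist (z j) (w j) ^ 2) := by
    rw [Real.sqrt_sq dist_nonneg, Real.dist_eq]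
  rw [h0]
  apply Real.sqrt_le_sqrt
  exact Finset.single_le_sum (f := fun i => dist (z i) (w i) ^ 2)
    (fun i _ => sq_nonneg _) (Finset.mem_univ j)

lemma sep_coord {n k : ℕ} (hk : k < n) {b b' : ℕ → Bool} (hbb : b k ≠ b' k)
    (hagree : ∀ i < k, b i = b' i) {u v : ℝ}
    (hu : u ∈ Icc (cX n b) (cX n b + sideLen n))
    (hv : v ∈ Icc (cX n b') (cX n b' + sideLen n)) :
    2 * sideLen n ≤ |u - v| := by
  have hchain : 2 * sideLen n ≤ sideLen k - 2 * sideLen (k + 1) := by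
    have h1 := four_mul_sideLen_succ_le k
    have h2 : sideLen n ≤ sideLen (k + 1) := sideLen_antitone hk
    linarith
  cases hb : b k with
  | false =>
    cases hb' : b' k with
    | false => exact absurd (hb.trans hb'.symm) hbb
    | true =>
      have := sep1d hk hb hb' hagree hu hv
      calc 2 * sideLen n ≤ v - u := by linarith
        _ ≤ |u - v| := by rw [abs_sub_comm]; exact le_abs_self _
  | true =>
    cases hb' : b' k with
    | true => exact absurd (hb.trans hb'.symm) hbb
    | false =>
      have := sep1d hk hb' hb (fun i hi => (hagree i hi).symm) hv hu
      calc 2 * sideLen n ≤ u - v := by linarith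
        _ ≤ |u - v| := le_abs_self _

/-- extension of a finite code to ℕ, first coordinate -/
def ext1 {n : ℕ} (σ : Fin n → Bool × Bool) : ℕ → Bool :=
  fun i => if h : i < n then (σ ⟨i, h⟩).1 else false

def ext2 {n : ℕ} (σ : Fin n → Bool × Bool) : ℕ → Bool :=
  fun i => if h : i < n then (σ ⟨i, h⟩).2 else false

lemma cornerX_eq (n : ℕ) (σ : Fin n → Bool × Bool) : cornerX n σ = cX n (ext1 σ) := by
  unfold cornerX cX
  rw [← Fin.sum_univ_eq_sum_range (fun i => if ext1 σ i then dd i else 0) n]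
  apply Finset.sum_congr rfl
  intro i _
  have : ext1 σ (i : ℕ) = (σ i).1 := by simp [ext1, i.isLt]
  rw [this]; rfl

lemma cornerY_eq (n : ℕ) (σ : Fin n → Bool × Bool) : cornerY n σ = cX n (ext2 σ) := by
  unfold cornerY cX
  rw [← Fin.sum_univ_eq_sum_range (fun i => if ext2 σ i then dd i else 0) n]
  apply Finset.sum_congr rfl
  intro i _
  have : ext2 σ (i : ℕ) = (σ i).2 := by simp [ext2, i.isLt]
  rw [this]; rfl

lemma sep2d {n : ℕ} {σ σ' : Fin n → Bool × Bool} (hne : σ ≠ σ')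
    {z w : EuclideanSpace ℝ (Fin 2)}
    (hz : z ∈ planeSq (cornerX n σ) (cornerY n σ) (sideLen n))
    (hw : w ∈ planeSq (cornerX n σ') (cornerY n σ') (sideLen n)) :
    2 * sideLen n ≤ dist z w := by
  have hex : ∃ m, ∃ h : m < n, σ ⟨m, h⟩ ≠ σ' ⟨m, h⟩ := by
    by_contra hco
    push_neg at hco
    exact hne (funext fun i => by simpa using hco i.val i.isLt)
  classical
  set k := Nat.find hex with hkdef
  obtain ⟨hk, hneq⟩ := Nat.find_spec hex
  have hmin : ∀ i, i < k → ∀ h : i < n, σ ⟨i, h⟩ = σ' ⟨i, h⟩ := by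
    intro i hik h
    have := Nat.find_min hex hik
    push_neg at this
    exact this h
  simp only [planeSq, mem_setOf_eq] at hz hw
  rw [cornerX_eq, cornerY_eq] at hz hw
  have hcases : (σ ⟨k, hk⟩).1 ≠ (σ' ⟨k, hk⟩).1 ∨ (σ ⟨k, hk⟩).2 ≠ (σ' ⟨k, hk⟩).2 := by
    by_contra hco
    push_neg at hco
    exact hneq (Prod.ext hco.1 hco.2)
  cases hcases with
  | inl h1 =>
    have hbb : ext1 σ k ≠ ext1 σ' k := by unfold ext1; rw [dif_pos hk, dif_pos hk]; exact h1
    have hagree : ∀ i < k, ext1 σ i = ext1 σ' i := by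
      intro i hik
      unfold ext1
      by_cases h : i < n
      · simp [h, hmin i hik h]
      · simp [h]
    have := sep_coord hk hbb hagree hz.1 hw.1
    exact this.trans (abs_coord_le_dist z w 0)
  | inr h2 =>
    have hbb : ext2 σ k ≠ ext2 σ' k := by unfold ext2; rw [dif_pos hk, dif_pos hk]; exact h2
    have hagree : ∀ i < k, ext2 σ i = ext2 σ' i := by
      intro i hik
      unfold ext2
      by_cases h : i < n
      · simp [h, hmin i hik h]
      · simp [h]
    have := sep_coord hk hbb hagree hz.2 hw.2
    exact this.trans (abs_coord_le_dist z w 1)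

/-! ### Measurability -/

lemma measurable_lowEnd (n : ℕ) : Measurable (lowEnd n) := by
  induction n with
  | zero => exact measurable_const
  | succ n ih =>
    have : lowEnd (n + 1) = fun t =>
        if lowEnd n t + (2 : ℝ)⁻¹ ^ (n + 1) ≤ t then lowEnd n t + (2 : ℝ)⁻¹ ^ (n + 1)
        else lowEnd n t := rfl
    rw [this]
    exact Measurable.ite (measurableSet_le (ih.add_const _) measurable_id)
      (ih.add_const _) ih

lemma measurableSet_dig (n : ℕ) : MeasurableSet {t : ℝ | dig n t = true} := by
  have : {t : ℝ | dig n t = true} = {t : ℝ | lowEnd n t + (2 : ℝ)⁻¹ ^ (n + 1) ≤ t} := by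
    ext t; simp [dig]
  rw [this]
  exact measurableSet_le ((measurable_lowEnd n).add_const _) measurable_id

lemma measurable_hc (n : ℕ) : Measurable (hc n) := by
  unfold hc cX
  apply Finset.measurable_sum
  intro i _
  exact Measurable.ite (measurableSet_dig i) measurable_const measurable_const

lemma measurable_hh : Measurable hh := by
  apply measurable_of_tendsto_metrizable measurable_hc
  rw [tendsto_pi_nhds]
  intro t
  rw [tendsto_iff_dist_tendsto_zero]
  apply squeeze_zero (fun n => dist_nonneg) (g := sideLen)
  · intro n
    have h := hh_mem t n
    rw [Real.dist_eq, abs_le]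
    constructor <;> [skip; skip] <;> cases h with | intro h1 h2 => ?_
    · linarith [sideLen_pos n]
    · linarith
  · exact sideLen_tendsto

noncomputable def Phi (p : ℝ × ℝ) : EuclideanSpace ℝ (Fin 2) :=
  (MeasurableEquiv.toLp 2 (Fin 2 → ℝ)).symm.symm ![hh p.1, hh p.2]

lemma Phi_apply0 (p : ℝ × ℝ) : Phi p 0 = hh p.1 := rfl
lemma Phi_apply1 (p : ℝ × ℝ) : Phi p 1 = hh p.2 := rfl

lemma measurable_Phi : Measurable Phi := by
  apply (MeasurableEquiv.toLp 2 (Fin 2 → ℝ)).symm.symm.measurable.comp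
  rw [measurable_pi_iff]
  intro i
  fin_cases i
  · exact measurable_hh.comp measurable_fst
  · exact measurable_hh.comp measurable_snd

lemma measurableSet_planeSq (a b s : ℝ) : MeasurableSet (planeSq a b s) := by
  have h0 : Measurable fun p : EuclideanSpace ℝ (Fin 2) => p 0 :=
    (measurable_pi_apply 0).comp (MeasurableEquiv.toLp 2 (Fin 2 → ℝ)).symm.measurable
  have h1 : Measurable fun p : EuclideanSpace ℝ (Fin 2) => p 1 :=
    (measurable_pi_apply 1).comp (MeasurableEquiv.toLp 2 (Fin 2 → ℝ)).symm.measurable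
  exact (h0 measurableSet_Icc).inter (h1 measurableSet_Icc)

lemma measurableSet_W : MeasurableSet fourCornersW :=
  MeasurableSet.iInter fun n => MeasurableSet.iUnion fun σ => measurableSet_planeSq _ _ _

/-! ### The natural measure -/

noncomputable def mu : Measure (EuclideanSpace ℝ (Fin 2)) :=
  Measure.map Phi (volume.restrict (Ico (0 : ℝ) 1 ×ˢ Ico (0 : ℝ) 1))

/-- the code of a point -/
noncomputable def code (n : ℕ) (p : ℝ × ℝ) : Fin n → Bool × Bool :=
  fun i => (dig i p.1, dig i p.2)

lemma Phi_mem (p : ℝ × ℝ) (n : ℕ) :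
    Phi p ∈ planeSq (cornerX n (code n p)) (cornerY n (code n p)) (sideLen n) := by
  have hx : cornerX n (code n p) = hc n p.1 := by
    rw [cornerX_eq]
    exact cX_congr fun i hi => by simp [ext1, hi, code]
  have hy : cornerY n (code n p) = hc n p.2 := by
    rw [cornerY_eq]
    exact cX_congr fun i hi => by simp [ext2, hi, code]
  constructor
  · rw [Phi_apply0, hx]; exact hh_mem p.1 n
  · rw [Phi_apply1, hy]; exact hh_mem p.2 n

lemma Phi_mem_W (p : ℝ × ℝ) : Phi p ∈ fourCornersW :=
  mem_iInter.2 fun n => mem_iUnion.2 ⟨code n p, Phi_mem p n⟩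

lemma mu_compl (n : ℕ) :
    mu ((⋃ σ : Fin n → Bool × Bool, planeSq (cornerX n σ) (cornerY n σ) (sideLen n))ᶜ) = 0 := by
  have hmeas : MeasurableSet
      (⋃ σ : Fin n → Bool × Bool, planeSq (cornerX n σ) (cornerY n σ) (sideLen n))ᶜ :=
    (MeasurableSet.iUnion fun σ => measurableSet_planeSq _ _ _).compl
  rw [mu, Measure.map_apply measurable_Phi hmeas]
  have : Phi ⁻¹' (⋃ σ : Fin n → Bool × Bool,
      planeSq (cornerX n σ) (cornerY n σ) (sideLen n))ᶜ = ∅ := by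
    ext p
    simp only [mem_preimage, mem_compl_iff, mem_empty_iff_false, iff_false, not_not]
    exact mem_iUnion.2 ⟨code n p, Phi_mem p n⟩
  rw [this]
  simp

lemma mu_W : mu fourCornersW = 1 := by
  rw [mu, Measure.map_apply measurable_Phi measurableSet_W]
  have : Phi ⁻¹' fourCornersW = univ := eq_univ_of_forall fun p => Phi_mem_W p
  rw [this, Measure.restrict_apply MeasurableSet.univ, univ_inter,
    Measure.volume_eq_prod, Measure.prod_prod, Real.volume_Ico]
  norm_num

lemma digits_match {n : ℕ} {b : ℕ → Bool} {t : ℝ}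
    (ht : hh t ∈ Icc (cX n b) (cX n b + sideLen n)) : ∀ i < n, dig i t = b i := by
  by_contra hco
  push_neg at hco
  have hex : ∃ i, i < n ∧ dig i t ≠ b i := hco
  classical
  obtain ⟨hk, hne⟩ := Nat.find_spec hex
  set k := Nat.find hex
  have hmin : ∀ i < k, dig i t = b i := by
    intro i hik
    have := Nat.find_min hex hik
    push_neg at this
    by_cases hin : i < n
    · exact this hin
    · omega
  have hsep := sep_coord hk hne hmin (hh_mem t n) ht
  simp only [sub_self, abs_zero] at hsep
  linarith [sideLen_pos n]

lemma mu_planeSq_le (n : ℕ) (σ : Fin n → Bool × Bool) :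
    mu (planeSq (cornerX n σ) (cornerY n σ) (sideLen n)) ≤
      ENNReal.ofReal ((2 : ℝ)⁻¹ ^ n) * ENNReal.ofReal ((2 : ℝ)⁻¹ ^ n) := by
  set q1 : ℝ := ∑ i ∈ Finset.range n, (if ext1 σ i then (2 : ℝ)⁻¹ ^ (i + 1) else 0) with hq1
  set q2 : ℝ := ∑ i ∈ Finset.range n, (if ext2 σ i then (2 : ℝ)⁻¹ ^ (i + 1) else 0) with hq2
  rw [mu, Measure.map_apply measurable_Phi (measurableSet_planeSq _ _ _),
    Measure.restrict_apply (measurable_Phi (measurableSet_planeSq _ _ _))]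
  have hsub : Phi ⁻¹' planeSq (cornerX n σ) (cornerY n σ) (sideLen n) ∩
      (Ico (0 : ℝ) 1 ×ˢ Ico (0 : ℝ) 1) ⊆
      Ico q1 (q1 + (2 : ℝ)⁻¹ ^ n) ×ˢ Ico q2 (q2 + (2 : ℝ)⁻¹ ^ n) := by
    rintro p ⟨hp, hbox⟩
    have hx : hh p.1 ∈ Icc (cX n (ext1 σ)) (cX n (ext1 σ) + sideLen n) := by
      have := hp.1
      rwa [Phi_apply0, cornerX_eq] at this
    have hy : hh p.2 ∈ Icc (cX n (ext2 σ)) (cX n (ext2 σ) + sideLen n) := by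
      have := hp.2
      rwa [Phi_apply1, cornerY_eq] at this
    have hd1 := digits_match hx
    have hd2 := digits_match hy
    have hl1 : lowEnd n p.1 = q1 := by
      rw [lowEnd_eq_sum, hq1]
      exact Finset.sum_congr rfl fun i hi => by rw [hd1 i (Finset.mem_range.1 hi)]
    have hl2 : lowEnd n p.2 = q2 := by
      rw [lowEnd_eq_sum, hq2]
      exact Finset.sum_congr rfl fun i hi => by rw [hd2 i (Finset.mem_range.1 hi)]
    have hm1 := lowEnd_mem hbox.1 n
    have hm2 := lowEnd_mem hbox.2 n
    rw [hl1] at hm1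
    rw [hl2] at hm2
    exact ⟨⟨hm1.1, hm1.2⟩, ⟨hm2.1, hm2.2⟩⟩
  calc volume (Phi ⁻¹' planeSq (cornerX n σ) (cornerY n σ) (sideLen n) ∩
      (Ico (0 : ℝ) 1 ×ˢ Ico (0 : ℝ) 1))
      ≤ volume (Ico q1 (q1 + (2 : ℝ)⁻¹ ^ n) ×ˢ Ico q2 (q2 + (2 : ℝ)⁻¹ ^ n)) :=
        measure_mono hsub
    _ = ENNReal.ofReal ((2 : ℝ)⁻¹ ^ n) * ENNReal.ofReal ((2 : ℝ)⁻¹ ^ n) := by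
        rw [Measure.volume_eq_prod, Measure.prod_prod, Real.volume_Ico]
        norm_num

lemma mu_le_of_ediam_lt {s : Set (EuclideanSpace ℝ (Fin 2))} {n : ℕ}
    (h : EMetric.diam s < ENNReal.ofReal (sideLen n)) :
    mu s ≤ ENNReal.ofReal ((2 : ℝ)⁻¹ ^ n) * ENNReal.ofReal ((2 : ℝ)⁻¹ ^ n) := by
  set U := ⋃ σ : Fin n → Bool × Bool, planeSq (cornerX n σ) (cornerY n σ) (sideLen n) with hU
  by_cases hsU : (s ∩ U).Nonempty
  · obtain ⟨z, hzs, hzU⟩ := hsU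
    obtain ⟨σ₀, hz⟩ := mem_iUnion.1 hzU
    have hsub : s ⊆ planeSq (cornerX n σ₀) (cornerY n σ₀) (sideLen n) ∪ Uᶜ := by
      intro w hws
      by_cases hwU : w ∈ U
      · obtain ⟨σ', hw⟩ := mem_iUnion.1 hwU
        left
        by_cases hss : σ' = σ₀
        · rwa [hss] at hw
        · exfalso
          have hed : edist z w ≤ EMetric.diam s := EMetric.edist_le_diam_of_mem hzs hws
          have hlt : edist z w < ENNReal.ofReal (sideLen n) := lt_of_le_of_lt hed h
          rw [edist_dist] at hlt
          have hdlt : dist z w < sideLen n :=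
            (ENNReal.ofReal_lt_ofReal_iff (sideLen_pos n)).1 hlt
          have h2 := sep2d (show σ₀ ≠ σ' from fun hE => hss hE.symm) hz hw
          linarith [sideLen_pos n]
      · right; exact hwU
    calc mu s ≤ mu (planeSq (cornerX n σ₀) (cornerY n σ₀) (sideLen n) ∪ Uᶜ) :=
          measure_mono hsub
      _ ≤ mu (planeSq (cornerX n σ₀) (cornerY n σ₀) (sideLen n)) + mu Uᶜ :=
          measure_union_le _ _
      _ = mu (planeSq (cornerX n σ₀) (cornerY n σ₀) (sideLen n)) := by
          rw [hU, mu_compl n, add_zero]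
      _ ≤ _ := mu_planeSq_le n σ₀
  · have hss : s ⊆ Uᶜ := fun x hx hUx => hsU ⟨x, hx, hUx⟩
    calc mu s ≤ mu Uᶜ := measure_mono hss
      _ = 0 := by rw [hU]; exact mu_compl n
      _ ≤ _ := zero_le

/-! ### Upper bound: diameter of squares -/

lemma ediam_planeSq_le (a b : ℝ) {s : ℝ} (hs : 0 ≤ s) :
    EMetric.diam (planeSq a b s) ≤ ENNReal.ofReal (2 * s) := by
  apply EMetric.diam_le
  intro z hz w hw
  rw [edist_dist]
  apply ENNReal.ofReal_le_ofReal
  rw [EuclideanSpace.dist_eq]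
  have h0 : dist (z 0) (w 0) ≤ s := by
    have := Real.dist_le_of_mem_Icc hz.1 hw.1
    simpa using this
  have h1 : dist (z 1) (w 1) ≤ s := by
    have := Real.dist_le_of_mem_Icc hz.2 hw.2
    simpa using this
  have hsum : ∑ i : Fin 2, dist (z i) (w i) ^ 2 ≤ (2 * s) ^ 2 := by
    rw [Fin.sum_univ_two]
    nlinarith [dist_nonneg (x := z 0) (y := w 0), dist_nonneg (x := z 1) (y := w 1)]
  calc Real.sqrt (∑ i : Fin 2, dist (z i) (w i) ^ 2) ≤ Real.sqrt ((2 * s) ^ 2) :=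
        Real.sqrt_le_sqrt hsum
    _ = 2 * s := Real.sqrt_sq (by linarith)

lemma H1_zero : μH[(1 : ℝ)] fourCornersW = 0 := by
  refine le_antisymm ?_ (zero_le)
  have hcov := Measure.hausdorffMeasure_le_liminf_sum (ι := fun n : ℕ => Fin n → Bool × Bool)
    (1 : ℝ) fourCornersW (l := atTop) (fun n => ENNReal.ofReal (2 * sideLen n))
    ?_ (fun n σ => planeSq (cornerX n σ) (cornerY n σ) (sideLen n)) ?_ ?_
  · refine hcov.trans ?_
    have hg : Tendsto (fun n : ℕ => ENNReal.ofReal ((4 : ℝ) ^ n * (2 * sideLen n))) atTop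
        (nhds 0) := by
      have heq : ∀ n : ℕ, (4 : ℝ) ^ n * (2 * sideLen n) = 2 / ((n : ℝ) + 1) ^ 2 := by
        intro n
        rw [sideLen]
        have h4 : (4 : ℝ) ^ n ≠ 0 := by positivity
        have hn : ((n : ℝ) + 1) ^ 2 ≠ 0 := by positivity
        field_simp
      simp_rw [heq]
      rw [show (0 : ℝ≥0∞) = ENNReal.ofReal 0 by simp]
      apply ENNReal.tendsto_ofReal
      apply Tendsto.div_atTop tendsto_const_nhds
      apply Tendsto.comp (tendsto_pow_atTop (two_ne_zero))
      exact tendsto_atTop_add_const_right _ _ tendsto_natCast_atTop_atTop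
    have hle : ∀ n : ℕ, (∑ σ : Fin n → Bool × Bool,
        EMetric.diam (planeSq (cornerX n σ) (cornerY n σ) (sideLen n)) ^ (1 : ℝ)) ≤
        ENNReal.ofReal ((4 : ℝ) ^ n * (2 * sideLen n)) := by
      intro n
      have hcard : Fintype.card (Fin n → Bool × Bool) = 4 ^ n := by
        simp [Fintype.card_fun]
      calc (∑ σ : Fin n → Bool × Bool,
          EMetric.diam (planeSq (cornerX n σ) (cornerY n σ) (sideLen n)) ^ (1 : ℝ))
          ≤ ∑ _σ : Fin n → Bool × Bool, ENNReal.ofReal (2 * sideLen n) := by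
            apply Finset.sum_le_sum
            intro σ _
            rw [ENNReal.rpow_one]
            exact ediam_planeSq_le _ _ (sideLen_pos n).le
        _ = (4 ^ n : ℕ) * ENNReal.ofReal (2 * sideLen n) := by
            rw [Finset.sum_const, Finset.card_univ, hcard, nsmul_eq_mul]
        _ = ENNReal.ofReal ((4 : ℝ) ^ n * (2 * sideLen n)) := by
            rw [← ENNReal.ofReal_natCast (4 ^ n), ← ENNReal.ofReal_mul (by positivity)]
            congr 1
            push_cast
            ring
    calc liminf (fun n : ℕ => ∑ σ : Fin n → Bool × Bool,
          EMetric.diam (planeSq (cornerX n σ) (cornerY n σ) (sideLen n)) ^ (1 : ℝ)) atTop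
        ≤ liminf (fun n : ℕ => ENNReal.ofReal ((4 : ℝ) ^ n * (2 * sideLen n))) atTop :=
          liminf_le_liminf (Eventually.of_forall hle)
      _ = 0 := hg.liminf_eq
  · rw [show (0 : ℝ≥0∞) = ENNReal.ofReal 0 by simp]
    apply ENNReal.tendsto_ofReal
    simpa using sideLen_tendsto.const_mul 2
  · exact Eventually.of_forall fun n σ => ediam_planeSq_le _ _ (sideLen_pos n).le
  · exact Eventually.of_forall fun n => iInter_subset _ n

/-! ### choice of scale -/

lemma exists_level {r : ℝ} (h0 : 0 < r) (h1 : r < 1) :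
    ∃ n, sideLen (n + 1) ≤ r ∧ r < sideLen n := by
  classical
  have hex : ∃ m, sideLen (m + 1) ≤ r := by
    have hev : ∀ᶠ m in atTop, sideLen m < r := sideLen_tendsto.eventually (gt_mem_nhds h0)
    obtain ⟨N, hN⟩ := eventually_atTop.1 hev
    exact ⟨N, (hN (N + 1) (by omega)).le⟩
  refine ⟨Nat.find hex, Nat.find_spec hex, ?_⟩
  rcases Nat.eq_zero_or_pos (Nat.find hex) with h | h
  · rw [h, sideLen_zero]; exact h1
  · have hm := Nat.find_min hex (m := Nat.find hex - 1) (by omega)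
    push_neg at hm
    have heq : Nat.find hex - 1 + 1 = Nat.find hex := by omega
    rwa [heq] at hm
lemma mu_le_ofReal {s : Set (EuclideanSpace ℝ (Fin 2))} {n : ℕ}
    (h : EMetric.diam s < ENNReal.ofReal (sideLen n)) :
    mu s ≤ ENNReal.ofReal ((4 : ℝ)⁻¹ ^ n) := by
  refine (mu_le_of_ediam_lt h).trans_eq ?_
  rw [← ENNReal.ofReal_mul (by positivity)]
  congr 1
  rw [← mul_pow]
  norm_num

lemma mu_diam_zero {s : Set (EuclideanSpace ℝ (Fin 2))} (h : EMetric.diam s = 0) :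
    mu s = 0 := by
  refine le_antisymm ?_ (zero_le)
  have hb : ∀ n, mu s ≤ ENNReal.ofReal ((4 : ℝ)⁻¹ ^ n) := fun n =>
    mu_le_ofReal (by rw [h]; exact ENNReal.ofReal_pos.2 (sideLen_pos n))
  have htends : Tendsto (fun n : ℕ => ENNReal.ofReal ((4 : ℝ)⁻¹ ^ n)) atTop (nhds 0) := by
    rw [show (0 : ℝ≥0∞) = ENNReal.ofReal 0 by simp]
    exact ENNReal.tendsto_ofReal
      (tendsto_pow_atTop_nhds_zero_of_lt_one (by norm_num) (by norm_num))
  exact ge_of_tendsto' htends hb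

/-- The key lower bound on the dimension. -/
lemma le_dimH (d : ℝ≥0) (hd : (d : ℝ≥0∞) < 1) : (d : ℝ≥0∞) ≤ dimH fourCornersW := by
  have hd1 : (d : ℝ) < 1 := by exact_mod_cast hd
  have hdnn : (0 : ℝ) ≤ (d : ℝ) := d.coe_nonneg
  set e : ℝ := 1 - (d : ℝ) with he
  have he0 : 0 < e := by rw [he]; linarith
  set ρ : ℝ := (4 : ℝ)⁻¹ ^ e with hρ
  have hρ0 : 0 < ρ := Real.rpow_pos_of_pos (by norm_num) e
  have hρ1 : ρ < 1 := Real.rpow_lt_one (by norm_num) (by norm_num) he0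
  have hsum : Summable (fun m : ℕ => (m : ℝ) ^ 2 * ρ ^ m) :=
    summable_pow_mul_geometric_of_norm_lt_one 2 (by rw [Real.norm_eq_abs, abs_of_pos hρ0]; exact hρ1)
  set M : ℝ := ∑' m : ℕ, (m : ℝ) ^ 2 * ρ ^ m with hM
  have hterm : ∀ n : ℕ, ((n : ℝ) + 2) ^ 2 * ρ ^ (n + 2) ≤ M := by
    intro n
    have h := Summable.le_tsum hsum (n + 2) (fun j _ => by positivity)
    push_cast at h
    exact h
  set C : ℝ := max 1 (4 * ρ⁻¹ * M) with hC
  have hC1 : (1 : ℝ) ≤ C := le_max_left _ _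
  have hC0 : (0 : ℝ) ≤ C := by linarith
  have key : ∀ n : ℕ, (4 : ℝ)⁻¹ ^ n ≤ C * sideLen (n + 1) ^ (d : ℝ) := by
    intro n
    have hLpos := sideLen_pos (n + 1)
    have hde : (d : ℝ) = 1 - e := by rw [he]; ring
    have hrpow_eq : sideLen (n + 1) ^ (d : ℝ) =
        sideLen (n + 1) * (sideLen (n + 1) ^ e)⁻¹ := by
      rw [hde, Real.rpow_sub hLpos, Real.rpow_one, div_eq_mul_inv]
    have hLe : sideLen (n + 1) ^ e ≤ ρ ^ (n + 1) := by
      have h1 : sideLen (n + 1) ^ e ≤ ((4 : ℝ)⁻¹ ^ (n + 1)) ^ e :=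
        Real.rpow_le_rpow hLpos.le (sideLen_le_geom (n + 1)) he0.le
      have h2 : (((4 : ℝ)⁻¹ ^ (n + 1)) : ℝ) ^ e = ρ ^ (n + 1) := by
        rw [← Real.rpow_natCast ((4 : ℝ)⁻¹) (n + 1), ← Real.rpow_mul (by norm_num), mul_comm,
          Real.rpow_mul (by norm_num), Real.rpow_natCast]
      rw [h2] at h1
      exact h1
    have hinv : (ρ ^ (n + 1))⁻¹ ≤ (sideLen (n + 1) ^ e)⁻¹ :=
      inv_anti₀ (Real.rpow_pos_of_pos hLpos e) hLe
    have hstep : sideLen (n + 1) * (ρ ^ (n + 1))⁻¹ ≤ sideLen (n + 1) ^ (d : ℝ) := by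
      rw [hrpow_eq]
      exact mul_le_mul_of_nonneg_left hinv hLpos.le
    have hYpos : (0 : ℝ) < (4 : ℝ) ^ (n + 1) * ((n : ℝ) + 2) ^ 2 * ρ ^ (n + 1) := by positivity
    have hmain : (4 : ℝ)⁻¹ ^ n ≤ C * (sideLen (n + 1) * (ρ ^ (n + 1))⁻¹) := by
      have hform : C * (sideLen (n + 1) * (ρ ^ (n + 1))⁻¹) =
          C / ((4 : ℝ) ^ (n + 1) * ((n : ℝ) + 2) ^ 2 * ρ ^ (n + 1)) := by
        rw [sideLen_succ]
        field_simp
      rw [hform, le_div_iff₀ hYpos]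
      have hXY : (4 : ℝ)⁻¹ ^ n * ((4 : ℝ) ^ (n + 1) * ((n : ℝ) + 2) ^ 2 * ρ ^ (n + 1)) =
          4 * ρ⁻¹ * (((n : ℝ) + 2) ^ 2 * ρ ^ (n + 2)) := by
        rw [inv_pow, pow_succ (4 : ℝ), pow_succ ρ (n + 1), pow_succ ρ n]
        have h4 : (4 : ℝ) ^ n ≠ 0 := by positivity
        field_simp
      rw [hXY]
      calc 4 * ρ⁻¹ * (((n : ℝ) + 2) ^ 2 * ρ ^ (n + 2)) ≤ 4 * ρ⁻¹ * M :=
            mul_le_mul_of_nonneg_left (hterm n) (by positivity)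
        _ ≤ C := le_max_right _ _
    calc (4 : ℝ)⁻¹ ^ n ≤ C * (sideLen (n + 1) * (ρ ^ (n + 1))⁻¹) := hmain
      _ ≤ C * sideLen (n + 1) ^ (d : ℝ) := mul_le_mul_of_nonneg_left hstep hC0
  have hbound : ∀ s : Set (EuclideanSpace ℝ (Fin 2)), EMetric.diam s ≤ ENNReal.ofReal (1 / 2) →
      mu s ≤ ENNReal.ofReal C * EMetric.diam s ^ (d : ℝ) := by
    intro s hdiam
    rcases eq_or_ne (EMetric.diam s) 0 with h0 | h0
    · rw [mu_diam_zero h0]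
      exact zero_le
    · have hne : EMetric.diam s ≠ ⊤ := (hdiam.trans_lt ENNReal.ofReal_lt_top).ne
      set r : ℝ := (EMetric.diam s).toReal with hr
      have hr0 : 0 < r := ENNReal.toReal_pos h0 hne
      have hr1 : r < 1 := by
        have := ENNReal.toReal_le_of_le_ofReal (by norm_num) hdiam
        rw [← hr] at this
        linarith
      obtain ⟨n, hn1, hn2⟩ := exists_level hr0 hr1
      have hdiam_eq : EMetric.diam s = ENNReal.ofReal r := (ENNReal.ofReal_toReal hne).symm
      have hmu : mu s ≤ ENNReal.ofReal ((4 : ℝ)⁻¹ ^ n) :=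
        mu_le_ofReal (by
          rw [hdiam_eq]
          exact (ENNReal.ofReal_lt_ofReal_iff (sideLen_pos n)).2 hn2)
      calc mu s ≤ ENNReal.ofReal ((4 : ℝ)⁻¹ ^ n) := hmu
        _ ≤ ENNReal.ofReal (C * sideLen (n + 1) ^ (d : ℝ)) := ENNReal.ofReal_le_ofReal (key n)
        _ = ENNReal.ofReal C * ENNReal.ofReal (sideLen (n + 1) ^ (d : ℝ)) :=
            ENNReal.ofReal_mul hC0
        _ ≤ ENNReal.ofReal C * EMetric.diam s ^ (d : ℝ) := by
            apply mul_le_mul_right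
            rw [← ENNReal.ofReal_rpow_of_pos (sideLen_pos (n + 1)), hdiam_eq]
            exact ENNReal.rpow_le_rpow (ENNReal.ofReal_le_ofReal hn1) hdnn
  set CE := ENNReal.ofReal C with hCE
  have hCE0 : CE ≠ 0 := by
    rw [hCE, Ne, ENNReal.ofReal_eq_zero]
    push_neg
    linarith
  have hCEtop : CE ≠ ⊤ := ENNReal.ofReal_ne_top
  have hmeasle : CE⁻¹ • mu ≤ μH[(d : ℝ)] := by
    apply Measure.le_hausdorffMeasure _ _ (ENNReal.ofReal (1 / 2))
      (ENNReal.ofReal_pos.2 (by norm_num))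
    intro s hs
    rw [Measure.smul_apply, smul_eq_mul]
    calc CE⁻¹ * mu s ≤ CE⁻¹ * (CE * EMetric.diam s ^ (d : ℝ)) :=
          mul_le_mul_right (hbound s hs) _
      _ = EMetric.diam s ^ (d : ℝ) := by
          rw [← mul_assoc, ENNReal.inv_mul_cancel hCE0 hCEtop, one_mul]
  have hH : μH[(d : ℝ)] fourCornersW ≠ 0 := by
    have h1 : CE⁻¹ * mu fourCornersW ≤ μH[(d : ℝ)] fourCornersW := by
      have h2 := Measure.le_iff'.1 hmeasle fourCornersW
      simpa [Measure.smul_apply, smul_eq_mul] using h2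
    rw [mu_W, mul_one] at h1
    intro hzero
    rw [hzero] at h1
    exact (ENNReal.inv_ne_zero.2 hCEtop) (le_antisymm h1 (zero_le))
  exact le_dimH_of_hausdorffMeasure_ne_zero hH
end FCAux

/-- the modified four-corners Cantor set `W` built with ratios
`a_n = n²/(n+1)²` satisfies `dim_H(W) = 1` and `H¹(W) = 0`. -/
theorem fourCorners_dimH_eq_one_and_H1_zero :
    dimH fourCornersW = 1 ∧ μH[1] fourCornersW = 0 := by
  have hH1 : μH[(1 : ℝ)] fourCornersW = 0 := FCAux.H1_zero
  constructor
  · apply le_antisymm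
    · have hne : μH[((1 : ℝ≥0) : ℝ)] fourCornersW ≠ ⊤ := by
        rw [show ((1 : ℝ≥0) : ℝ) = (1 : ℝ) from NNReal.coe_one, hH1]
        exact ENNReal.zero_ne_top
      simpa using dimH_le_of_hausdorffMeasure_ne_top hne
    · exact ENNReal.le_of_forall_nnreal_lt fun r hr => FCAux.le_dimH r hr
  · exact hH1
end
end
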